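/- arXiv:1802.05655 — 6 statements merged into one kernel-verified Lean document; each statement's English description precedes it below -/
import Mathlib

section
/- Let a : [0,∞) → ℝ be strictly increasing with a(0) = 0, and let X, Y be vectors in an inner product space with X, Y ≠ 0. Then ⟨(a(|X|)/|X|)·X − (a(|Y|)/|Y|)·Y, X − Y⟩ ≥ (a(|X|) − a(|Y|))·(|X| − |Y|) ≥ 0. -/
open Set

theorem stmt_0 {E : Type*} [NormedAddCommGroup E] [InnerProductSpace ℝ E]
    (a : ℝ → ℝ) (ha : StrictMonoOn a (Set.Ici 0)) (ha0 : a 0 = 0)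
    (X Y : E) (hX : X ≠ 0) (hY : Y ≠ 0) :
    (a ‖X‖ - a ‖Y‖) * (‖X‖ - ‖Y‖) ≤
      inner ℝ ((a ‖X‖ / ‖X‖) • X - (a ‖Y‖ / ‖Y‖) • Y) (X - Y) ∧
    (0 : ℝ) ≤ (a ‖X‖ - a ‖Y‖) * (‖X‖ - ‖Y‖) := by
  have hXpos : (0:ℝ) < ‖X‖ := norm_pos_iff.mpr hX
  have hYpos : (0:ℝ) < ‖Y‖ := norm_pos_iff.mpr hY
  have haX : 0 < a ‖X‖ := by
    have := ha (Set.self_mem_Ici) (le_of_lt hXpos) hXpos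
    linarith [this]
  have haY : 0 < a ‖Y‖ := by
    have := ha (Set.self_mem_Ici) (le_of_lt hYpos) hYpos
    linarith [this]
  constructor
  · have hexp : (inner ℝ ((a ‖X‖ / ‖X‖) • X - (a ‖Y‖ / ‖Y‖) • Y) (X - Y) : ℝ)
        = a ‖X‖ * ‖X‖ + a ‖Y‖ * ‖Y‖
          - (a ‖X‖ / ‖X‖ + a ‖Y‖ / ‖Y‖) * (inner ℝ X Y : ℝ) := by
      rw [inner_sub_left, inner_sub_right, inner_sub_right,
        real_inner_smul_left, real_inner_smul_left, real_inner_smul_left,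
        real_inner_smul_left, real_inner_self_eq_norm_mul_norm,
        real_inner_self_eq_norm_mul_norm, real_inner_comm Y X]
      field_simp
      ring
    rw [hexp]
    have hco : (0:ℝ) < a ‖X‖ / ‖X‖ + a ‖Y‖ / ‖Y‖ := by positivity
    have hinner : (inner ℝ X Y : ℝ) ≤ ‖X‖ * ‖Y‖ := real_inner_le_norm X Y
    have : (a ‖X‖ / ‖X‖ + a ‖Y‖ / ‖Y‖) * (inner ℝ X Y : ℝ)
        ≤ (a ‖X‖ / ‖X‖ + a ‖Y‖ / ‖Y‖) * (‖X‖ * ‖Y‖) :=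
      mul_le_mul_of_nonneg_left hinner (le_of_lt hco)
    have hkey : (a ‖X‖ / ‖X‖ + a ‖Y‖ / ‖Y‖) * (‖X‖ * ‖Y‖)
        = a ‖X‖ * ‖Y‖ + a ‖Y‖ * ‖X‖ := by
      field_simp
    nlinarith
  · rcases lt_trichotomy ‖X‖ ‖Y‖ with h | h | h
    · have := ha (le_of_lt hXpos) (le_of_lt hYpos) h
      nlinarith
    · simp [h]
    · have := ha (le_of_lt hYpos) (le_of_lt hXpos) h
      nlinarith
end

section
/- Let a : [0,∞) → ℝ be strictly increasing with a(0)=0, and X, Y nonzero vectors in an inner product space. If ⟨(a(|X|)/|X|)·X − (a(|Y|)/|Y|)·Y, X − Y⟩ = 0, then X = Y. -/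
theorem stmt_1 {E : Type*} [NormedAddCommGroup E] [InnerProductSpace ℝ E]
    (a : ℝ → ℝ) (ha : StrictMonoOn a (Set.Ici 0)) (ha0 : a 0 = 0)
    (X Y : E) (hX : X ≠ 0) (hY : Y ≠ 0)
    (h : (inner ℝ ((a ‖X‖ / ‖X‖) • X - (a ‖Y‖ / ‖Y‖) • Y) (X - Y) : ℝ) = 0) :
    X = Y := by
  have hnX : (0:ℝ) < ‖X‖ := norm_pos_iff.mpr hX
  have hnY : (0:ℝ) < ‖Y‖ := norm_pos_iff.mpr hY
  have haX : 0 < a ‖X‖ := by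
    have := ha (Set.self_mem_Ici) (le_of_lt hnX : (0:ℝ) ≤ ‖X‖) hnX
    linarith [this]
  have haY : 0 < a ‖Y‖ := by
    have := ha (Set.self_mem_Ici) (le_of_lt hnY : (0:ℝ) ≤ ‖Y‖) hnY
    linarith [this]
  set p : ℝ := a ‖X‖ / ‖X‖ with hp
  set q : ℝ := a ‖Y‖ / ‖Y‖ with hq
  have hpp : 0 < p := div_pos haX hnX
  have hqp : 0 < q := div_pos haY hnY
  have hXX : (inner ℝ X X : ℝ) = ‖X‖ * ‖X‖ := real_inner_self_eq_norm_mul_norm X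
  have hYY : (inner ℝ Y Y : ℝ) = ‖Y‖ * ‖Y‖ := real_inner_self_eq_norm_mul_norm Y
  have hsym : (inner ℝ Y X : ℝ) = inner ℝ X Y := real_inner_comm X Y
  have hexp : p * (‖X‖ * ‖X‖) + q * (‖Y‖ * ‖Y‖) = (p + q) * (inner ℝ X Y : ℝ) := by
    have := h
    simp only [inner_sub_left, inner_sub_right, real_inner_smul_left] at this
    rw [hXX, hYY, hsym] at this
    ring_nf
    ring_nf at this
    linarith
  have hCS : (inner ℝ X Y : ℝ) ≤ ‖X‖ * ‖Y‖ := real_inner_le_norm X Y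
  have hnn : 0 ≤ (a ‖X‖ - a ‖Y‖) * (‖X‖ - ‖Y‖) := by
    rcases le_total ‖X‖ ‖Y‖ with hle | hle
    · have : a ‖X‖ ≤ a ‖Y‖ := ha.monotoneOn (le_of_lt hnX) (le_of_lt hnY) hle
      nlinarith
    · have : a ‖Y‖ ≤ a ‖X‖ := ha.monotoneOn (le_of_lt hnY) (le_of_lt hnX) hle
      nlinarith
  have hkey : (p * ‖X‖ - q * ‖Y‖) * (‖X‖ - ‖Y‖) ≤ 0 := by
    nlinarith [hCS, hexp, hpp, hqp]
  have hpx : p * ‖X‖ = a ‖X‖ := div_mul_cancel₀ _ (ne_of_gt hnX)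
  have hqy : q * ‖Y‖ = a ‖Y‖ := div_mul_cancel₀ _ (ne_of_gt hnY)
  rw [hpx, hqy] at hkey
  have hnorm : ‖X‖ = ‖Y‖ := by
    by_contra hne
    rcases lt_or_gt_of_ne hne with hlt | hlt
    · have : a ‖X‖ < a ‖Y‖ := ha (le_of_lt hnX) (le_of_lt hnY) hlt
      nlinarith
    · have : a ‖Y‖ < a ‖X‖ := ha (le_of_lt hnY) (le_of_lt hnX) hlt
      nlinarith
  have hinner : (inner ℝ X Y : ℝ) = ‖X‖ * ‖Y‖ := by
    have hpq : 0 < p + q := by linarith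
    rw [← hnorm] at hexp ⊢
    have : (p + q) * (‖X‖ * ‖X‖) = (p + q) * (inner ℝ X Y : ℝ) := by linarith [hexp]
    exact (mul_left_cancel₀ (ne_of_gt hpq) this).symm
  have := (inner_eq_norm_mul_iff_real).mp hinner
  rw [hnorm] at this
  exact smul_right_injective E (ne_of_gt hnY) this
end

section
/- Let b : [s₀,∞) → ℝ be a C¹ function with b ≥ −1 such that (−b′(s)·s − (b(s)+1))·s² ≥ α for all s ≥ s₀, where α > 0. Then b(s) + 1 → 0 as s → ∞. -/
open Filter

theorem stmt_2 (s₀ α : ℝ) (hs₀ : 0 < s₀) (hα : 0 < α)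
    (b b' : ℝ → ℝ)
    (hderiv : ∀ s, s₀ ≤ s → HasDerivAt b (b' s) s)
    (hb'cont : ContinuousOn b' (Set.Ici s₀))
    (hb : ∀ s, s₀ ≤ s → -1 ≤ b s)
    (hcond : ∀ s, s₀ ≤ s → (-(b' s) * s - (b s + 1)) * s ^ 2 ≥ α) :
    Tendsto (fun s => b s + 1) atTop (nhds 0) := by
  set g : ℝ → ℝ := fun s => s * (b s + 1) with hg
  have hgderiv : ∀ s, s₀ ≤ s → HasDerivAt g ((b s + 1) + s * b' s) s := by
    intro s hs
    have h1 : HasDerivAt (fun s => b s + 1) (b' s) s := (hderiv s hs).add_const 1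
    have : HasDerivAt (fun i => id i * (b i + 1)) (1 * (b s + 1) + id s * b' s) s :=
      (hasDerivAt_id s).fun_mul h1
    convert this using 1
    simp only [id_eq]
    ring
    simp only [id_eq, one_mul]
  have hgneg : ∀ s, s₀ ≤ s → (b s + 1) + s * b' s < 0 := by
    intro s hs
    have hspos : 0 < s := hs₀.trans_le hs
    have h := hcond s hs
    nlinarith [sq_nonneg s, hα]
  have hcont : ContinuousOn g (Set.Ici s₀) := fun s hs =>
    ((hgderiv s hs).continuousAt).continuousWithinAt
  have hanti : StrictAntiOn g (Set.Ici s₀) := by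
    apply strictAntiOn_of_deriv_neg (convex_Ici s₀) hcont
    intro x hx
    rw [interior_Ici] at hx
    rw [(hgderiv x (le_of_lt hx)).deriv]
    exact hgneg x (le_of_lt hx)
  have hmono : ∀ s, s₀ ≤ s → g s ≤ g s₀ := by
    intro s hs
    rcases eq_or_lt_of_le hs with h | h
    · rw [← h]
    · exact le_of_lt (hanti (Set.self_mem_Ici) hs h)
  have hupper : Tendsto (fun s : ℝ => g s₀ / s) atTop (nhds 0) :=
    tendsto_const_nhds.div_atTop tendsto_id
  apply tendsto_of_tendsto_of_tendsto_of_le_of_le' tendsto_const_nhds hupper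
  · filter_upwards [eventually_ge_atTop s₀] with s hs
    linarith [hb s hs]
  · filter_upwards [eventually_ge_atTop s₀] with s hs
    have hspos : 0 < s := hs₀.trans_le hs
    have h2 := hmono s hs
    simp only [hg] at h2 ⊢
    rw [le_div_iff₀ hspos]
    linarith
end

section
/- Let b : [s₀,∞) → ℝ be a C¹ function with b ≥ −1 such that (−b′(s)·s − (b(s)+1))·s² ≥ α for all s ≥ s₀, with α > 0 and s₀ > 0. Then (1 + b(s))·s² ≥ α/2 for all s > s₀. -/
theorem stmt_3 (s₀ α : ℝ) (hs₀ : 0 < s₀) (hα : 0 < α)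
    (b b' : ℝ → ℝ)
    (hderiv : ∀ s, s₀ ≤ s → HasDerivAt b (b' s) s)
    (hb'cont : ContinuousOn b' (Set.Ici s₀))
    (hb : ∀ s, s₀ ≤ s → -1 ≤ b s)
    (hcond : ∀ s, s₀ ≤ s → (-(b' s) * s - (b s + 1)) * s ^ 2 ≥ α) :
    ∀ s, s₀ < s → (1 + b s) * s ^ 2 ≥ α / 2 := by
  intro s hs
  have hss : s₀ ≤ s := hs.le
  have hspos : 0 < s := hs₀.trans hs
  set h : ℝ → ℝ := fun x => b x - α / 2 * (x ^ 2)⁻¹ with hh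
  have hderivh : ∀ x, s₀ ≤ x → HasDerivAt h (b' x - α / 2 * (-(2 * x ^ 1) / (x ^ 2) ^ 2)) x := by
    intro x hx
    have hxpos : 0 < x := lt_of_lt_of_le hs₀ hx
    have h1 : HasDerivAt (fun y : ℝ => (y ^ 2)⁻¹) (-(2 * x ^ 1) / (x ^ 2) ^ 2) x := by
      have := (hasDerivAt_pow 2 x).inv (by positivity)
      simpa [Pi.inv_def] using this
    exact (hderiv x hx).sub (h1.const_mul (α / 2))
  have hanti : AntitoneOn h (Set.Ici s₀) := by
    apply antitoneOn_of_deriv_nonpos (convex_Ici s₀)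
    · intro x hx
      exact ((hderivh x hx).continuousAt).continuousWithinAt
    · intro x hx
      rw [interior_Ici] at hx
      exact ((hderivh x hx.le).differentiableAt).differentiableWithinAt
    · intro x hx
      rw [interior_Ici] at hx
      have hxpos : 0 < x := hs₀.trans hx
      have hd := hderivh x hx.le
      rw [hd.deriv]
      have hc := hcond x hx.le
      have hbx := hb x hx.le
      have hx3 : (0:ℝ) < x ^ 3 := by positivity
      have e : b' x - α / 2 * (-(2 * x ^ 1) / (x ^ 2) ^ 2) = b' x + α / x ^ 3 := by
        field_simp
        ring
      rw [e]
      have h2 : α / x ^ 3 ≤ -b' x := by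
        rw [div_le_iff₀ hx3]
        nlinarith [sq_nonneg x]
      linarith
  -- for σ ≥ s, -1 - α/2 * (σ^2)⁻¹ ≤ h s
  have key : ∀ σ, s ≤ σ → -1 - α / 2 * (σ ^ 2)⁻¹ ≤ h s := by
    intro σ hσ
    have hσ0 : s₀ ≤ σ := hss.trans hσ
    have := hanti (Set.mem_Ici.mpr hss) (Set.mem_Ici.mpr hσ0) hσ
    have hbσ := hb σ hσ0
    simp only [hh] at this ⊢
    linarith
  have hlim : Filter.Tendsto (fun σ : ℝ => -1 - α / 2 * (σ ^ 2)⁻¹) Filter.atTop (nhds (-1)) := by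
    have : Filter.Tendsto (fun σ : ℝ => (σ ^ 2)⁻¹) Filter.atTop (nhds 0) := by
      exact tendsto_inv_atTop_zero.comp (Filter.tendsto_pow_atTop (n := 2) (by norm_num))
    have h2 := this.const_mul (α / 2)
    have h3 := (tendsto_const_nhds (x := (-1 : ℝ)) (f := Filter.atTop)).sub h2
    simpa using h3
  have hge : -1 ≤ h s := by
    apply le_of_tendsto hlim
    filter_upwards [Filter.eventually_ge_atTop s] with σ hσ using key σ hσ
  simp only [hh] at hge
  have hs2 : (0:ℝ) < s ^ 2 := by positivity
  have : α / 2 * (s ^ 2)⁻¹ ≤ 1 + b s := by linarith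
  calc α / 2 = α / 2 * (s ^ 2)⁻¹ * s ^ 2 := by field_simp
    _ ≤ (1 + b s) * s ^ 2 := by nlinarith
end

section
/- Let b : [s₀,∞) → ℝ be C¹ with b(s)+1 > 0 and (−b′(s)·s − (1+ε)(b(s)+1))·s² ≥ α for all s ≥ s₀, with 0 < ε < 1 and α, s₀ > 0. Then there exists s₁ ≥ s₀ such that 2b(s) + 1 + ε < 0 for all s ≥ s₁. -/
theorem stmt_5 (s₀ ε α : ℝ) (hs₀ : 0 < s₀) (hε0 : 0 < ε) (hε1 : ε < 1) (hα : 0 < α)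
    (b b' : ℝ → ℝ)
    (hderiv : ∀ s, s₀ ≤ s → HasDerivAt b (b' s) s)
    (hb'cont : ContinuousOn b' (Set.Ici s₀))
    (hb : ∀ s, s₀ ≤ s → 0 < b s + 1)
    (hcond : ∀ s, s₀ ≤ s → (-(b' s) * s - (1 + ε) * (b s + 1)) * s ^ 2 ≥ α) :
    ∃ s₁, s₀ ≤ s₁ ∧ ∀ s, s₁ ≤ s → 2 * b s + 1 + ε < 0 := by
  set g : ℝ → ℝ := fun s => (b s + 1) * s with hg
  have hgderiv : ∀ s, s₀ ≤ s → HasDerivAt g (b' s * s + (b s + 1)) s := by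
    intro s hs
    exact (((hderiv s hs).add_const 1).mul (hasDerivAt_id' s)).congr_deriv (by ring)
  have hganti : AntitoneOn g (Set.Ici s₀) := by
    apply antitoneOn_of_deriv_nonpos (convex_Ici s₀)
    · intro s hs
      exact ((hgderiv s hs).continuousAt).continuousWithinAt
    · intro s hs
      rw [interior_Ici] at hs
      exact ((hgderiv s hs.le).differentiableAt).differentiableWithinAt
    · intro s hs
      rw [interior_Ici] at hs
      rw [(hgderiv s hs.le).deriv]
      have h1 := hcond s hs.le
      have h2 := hb s hs.le
      have hs0 : 0 < s := lt_trans hs₀ hs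
      nlinarith [sq_nonneg s, mul_pos (mul_pos hε0 h2) hs0]
  set C : ℝ := g s₀ with hC
  have hCpos : 0 < C := mul_pos (hb s₀ le_rfl) hs₀
  refine ⟨max s₀ (2 * C / (1 - ε) + 1), le_max_left _ _, ?_⟩
  intro s hs
  have hss₀ : s₀ ≤ s := le_trans (le_max_left _ _) hs
  have hsC : 2 * C / (1 - ε) + 1 ≤ s := le_trans (le_max_right _ _) hs
  have hspos : 0 < s := lt_of_lt_of_le hs₀ hss₀
  have hgle : g s ≤ C := hganti Set.self_mem_Ici hss₀ hss₀
  have h2 := hb s hss₀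
  have h1ε : 0 < 1 - ε := by linarith
  -- g s = (b s + 1) * s ≤ C, so b s + 1 ≤ C / s
  have key : (b s + 1) * s ≤ C := hgle
  have hsbig : 2 * C / (1 - ε) < s := by linarith [div_nonneg (by linarith : (0:ℝ) ≤ 2 * C) h1ε.le]
  have : 2 * C < (1 - ε) * s := by
    rw [div_lt_iff₀ h1ε] at hsbig; linarith
  nlinarith
end

section
/- Suppose there exist ε, α, s₀ > 0 such that (−s·b′(s) − (1+ε)(1+b(s)))·s² ≥ α for all s ≥ s₀. Then there exists κ₀ > 0 (depending on p, ε, α) such that for all κ ∈ (0,κ₀) and s ≥ s₀: (−s·b_κ′(s) − (1+ε)(1+b_κ(s)))·s² ≥ α/2, where b_κ(s) = b(s) − (p−2)κ/(κ+s²). -/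
theorem stmt_12 (p ε α s₀ : ℝ) (hp : 1 < p) (hε0 : 0 < ε) (hε1 : ε ≤ 1)
    (hα : 0 < α) (hs₀ : 0 < s₀)
    (b : ℝ → ℝ) (hb : Differentiable ℝ b)
    (hcond : ∀ s, s₀ ≤ s → (-(s * deriv b s) - (1 + ε) * (1 + b s)) * s ^ 2 ≥ α) :
    ∃ κ₀ > (0 : ℝ), ∀ κ, 0 < κ → κ < κ₀ → ∀ s, s₀ ≤ s →
      (-(s * deriv (fun t => b t - (p - 2) * κ / (κ + t ^ 2)) s) -
          (1 + ε) * (1 + (b s - (p - 2) * κ / (κ + s ^ 2)))) * s ^ 2 ≥ α / 2 := by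
  have hM : (0:ℝ) < |p - 2| + 1 := by positivity
  refine ⟨α / (8 * (|p - 2| + 1)), by positivity, ?_⟩
  intro κ hκ hκ₀ s hs
  have hD : (0:ℝ) < κ + s ^ 2 := by positivity
  have h1 : HasDerivAt (fun t : ℝ => κ + t ^ 2) (2 * s) s := by
    simpa using (hasDerivAt_pow 2 s).const_add κ
  have h2 : HasDerivAt (fun t => (p - 2) * κ / (κ + t ^ 2))
      (-((p - 2) * κ * (2 * s)) / (κ + s ^ 2) ^ 2) s := by
    have := (hasDerivAt_const s ((p - 2) * κ)).fun_div h1 (ne_of_gt hD)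
    rw [show -((p - 2) * κ * (2 * s)) / (κ + s ^ 2) ^ 2 = (0 * (κ + s ^ 2) - (p - 2) * κ * (2 * s)) / (κ + s ^ 2) ^ 2 by ring]
    exact this
  have hd : HasDerivAt (fun t => b t - (p - 2) * κ / (κ + t ^ 2))
      (deriv b s - -((p - 2) * κ * (2 * s)) / (κ + s ^ 2) ^ 2) s :=
    (hb s).hasDerivAt.sub h2
  rw [hd.deriv]
  set u : ℝ := s ^ 2 / (κ + s ^ 2) with hu
  have hu0 : 0 ≤ u := by positivity
  have hu1 : u ≤ 1 := by
    rw [hu, div_le_one hD]; nlinarith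
  have key : (-(s * (deriv b s - -((p - 2) * κ * (2 * s)) / (κ + s ^ 2) ^ 2)) -
      (1 + ε) * (1 + (b s - (p - 2) * κ / (κ + s ^ 2)))) * s ^ 2
      = (-(s * deriv b s) - (1 + ε) * (1 + b s)) * s ^ 2
        + (p - 2) * κ * ((1 + ε) * u - 2 * u ^ 2) := by
    rw [hu]
    field_simp
    ring
  rw [key]
  have hA := hcond s hs
  have habs : |(1 + ε) * u - 2 * u ^ 2| ≤ 4 := by
    rw [abs_le]; constructor <;> nlinarith
  have hC : (p - 2) * κ * ((1 + ε) * u - 2 * u ^ 2) ≥ -(α / 2) := by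
    have h3 : |(p - 2) * κ * ((1 + ε) * u - 2 * u ^ 2)| ≤ |p - 2| * κ * 4 := by
      rw [abs_mul, abs_mul, abs_of_pos hκ]
      exact mul_le_mul_of_nonneg_left habs (by positivity)
    have h4 : |p - 2| * κ * 4 ≤ α / 2 := by
      have h5 : κ * (8 * (|p - 2| + 1)) < α :=
        (lt_div_iff₀ (by positivity : (0:ℝ) < 8 * (|p - 2| + 1))).mp hκ₀
      nlinarith [abs_nonneg (p - 2)]
    have := neg_abs_le ((p - 2) * κ * ((1 + ε) * u - 2 * u ^ 2))
    linarith
  linarith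
end
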